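/- Let F : (ℂⁿ,0) → (ℂᵖ,0), n ≥ p > 0, be a holomorphic map germ such that the germ of the fibre F⁻¹(0) at the origin has complex dimension n − p and Sing F ∩ F⁻¹(0) = {0} (i.e., F⁻¹(0) is an isolated complete intersection singularity). Then F is a nice map germ (NMG): both the image Im F and the discriminant F(Sing F) are well-defined set germs at 0 ∈ ℂᵖ. -/

import Mathlib

open Metric Set

/-- The singular set of a holomorphic map `F : ℂⁿ → ℂᵖ`: points where the complex derivative
has rank `< p`. -/
noncomputable def csingSet {n p : ℕ}
    (F : EuclideanSpace ℂ (Fin n) → EuclideanSpace ℂ (Fin p)) :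
    Set (EuclideanSpace ℂ (Fin n)) :=
  {x | LinearMap.rank
      ((fderiv ℂ F x : EuclideanSpace ℂ (Fin n) →L[ℂ] EuclideanSpace ℂ (Fin p)) :
        EuclideanSpace ℂ (Fin n) →ₗ[ℂ] EuclideanSpace ℂ (Fin p)) < (p : Cardinal)}

open Filter Topology in
/-- The set of surjective continuous linear maps between Banach spaces is open. -/
lemma stmt14_isOpen_surjCLM {E F : Type*} [NormedAddCommGroup E] [NormedSpace ℂ E]
    [CompleteSpace E] [NormedAddCommGroup F] [NormedSpace ℂ F] [CompleteSpace F] :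
    IsOpen {g : E →L[ℂ] F | Function.Surjective g} := by
  rw [Metric.isOpen_iff]
  intro g hg
  have htop : LinearMap.range g.toLinearMap = ⊤ := LinearMap.range_eq_top.2 hg
  set gs := g.nonlinearRightInverseOfSurjective htop with hgs
  have hpos : (0 : ℝ) < (gs.nnnorm : ℝ)⁻¹ := by
    have := g.nonlinearRightInverseOfSurjective_nnnorm_pos htop
    rw [← hgs] at this
    positivity
  refine ⟨(gs.nnnorm : ℝ)⁻¹, hpos, ?_⟩
  intro h hh
  rw [mem_ball, dist_eq_norm] at hh
  have happ : ApproximatesLinearOn (⇑h) g univ ‖h - g‖₊ := by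
    intro x _ y _
    have he : h x - h y - g (x - y) = (h - g) (x - y) := by
      simp [map_sub]; abel
    rw [he]
    calc ‖(h - g) (x - y)‖ ≤ ‖h - g‖ * ‖x - y‖ := (h - g).le_opNorm _
    _ = (‖h - g‖₊ : ℝ) * ‖x - y‖ := by simp [coe_nnnorm]
  have hlt : ‖h - g‖₊ < gs.nnnorm⁻¹ := by
    rw [← NNReal.coe_lt_coe]
    simpa [coe_nnnorm] using hh
  have hop : IsOpen (⇑h '' univ) := happ.open_image gs isOpen_univ (Or.inr hlt)
  rw [Set.image_univ] at hop
  have hr : LinearMap.range h.toLinearMap = ⊤ := by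
    apply Submodule.eq_top_of_nonempty_interior'
    refine ⟨0, ?_⟩
    have : (LinearMap.range h.toLinearMap : Set F) = Set.range ⇑h := by
      ext z; simp [LinearMap.mem_range]
    rw [this, hop.interior_eq]
    exact ⟨0, map_zero h⟩
  exact LinearMap.range_eq_top.1 hr

lemma stmt14_rank_euclidean (p : ℕ) : Module.rank ℂ (EuclideanSpace ℂ (Fin p)) = p := by
  have h1 := Module.finrank_eq_rank ℂ (EuclideanSpace ℂ (Fin p))
  rw [finrank_euclideanSpace] at h1
  simpa using h1.symm

lemma stmt14_mem_csingSet_iff {n p : ℕ}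
    (F : EuclideanSpace ℂ (Fin n) → EuclideanSpace ℂ (Fin p))
    (x : EuclideanSpace ℂ (Fin n)) :
    x ∈ csingSet F ↔ ¬ Function.Surjective (fderiv ℂ F x) := by
  constructor
  · intro hlt hsurj
    have htop : LinearMap.range (fderiv ℂ F x).toLinearMap = ⊤ := LinearMap.range_eq_top.2 hsurj
    have : LinearMap.rank ((fderiv ℂ F x :
        EuclideanSpace ℂ (Fin n) →ₗ[ℂ] EuclideanSpace ℂ (Fin p))) = p := by
      rw [LinearMap.rank]
      rw [show LinearMap.range ((fderiv ℂ F x :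
        EuclideanSpace ℂ (Fin n) →ₗ[ℂ] EuclideanSpace ℂ (Fin p)))
        = LinearMap.range (fderiv ℂ F x).toLinearMap from rfl, htop, rank_top, stmt14_rank_euclidean]
    rw [csingSet, Set.mem_setOf_eq, this] at hlt
    exact lt_irrefl _ hlt
  · intro hns
    have hne : LinearMap.range (fderiv ℂ F x).toLinearMap < ⊤ := by
      rcases lt_or_eq_of_le (le_top (a := LinearMap.range (fderiv ℂ F x).toLinearMap)) with h | h
      · exact h
      · exact absurd (LinearMap.range_eq_top.1 h) hns
    have hlt' := Submodule.finrank_lt (K := ℂ) (V := EuclideanSpace ℂ (Fin p)) hne.ne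
    rw [csingSet, Set.mem_setOf_eq, LinearMap.rank]
    have heq := Module.finrank_eq_rank ℂ (LinearMap.range (fderiv ℂ F x).toLinearMap)
    rw [show LinearMap.range ((fderiv ℂ F x :
        EuclideanSpace ℂ (Fin n) →ₗ[ℂ] EuclideanSpace ℂ (Fin p)))
        = LinearMap.range (fderiv ℂ F x).toLinearMap from rfl, ← heq]
    rw [finrank_euclideanSpace] at hlt'
    simp only [Fintype.card_fin] at hlt'
    exact_mod_cast hlt'

lemma stmt14_csing_closed {n p : ℕ}
    (F : EuclideanSpace ℂ (Fin n) → EuclideanSpace ℂ (Fin p))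
    (hFan : ∀ x, AnalyticAt ℂ F x) : IsClosed (csingSet F) := by
  have hcd : ContDiff ℂ 1 F := contDiff_iff_contDiffAt.2 fun x => (hFan x).contDiffAt
  have hcont : Continuous (fderiv ℂ F) := hcd.continuous_fderiv one_ne_zero
  have : csingSet F = (fderiv ℂ F) ⁻¹' {g | Function.Surjective ⇑g}ᶜ := by
    ext x
    simp only [Set.mem_preimage, Set.mem_compl_iff, Set.mem_setOf_eq]
    exact stmt14_mem_csingSet_iff F x
  rw [this]
  exact stmt14_isOpen_surjCLM.isClosed_compl.preimage hcont

open Filter Topology in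
lemma stmt14_incl {n p : ℕ} (F : EuclideanSpace ℂ (Fin n) → EuclideanSpace ℂ (Fin p))
    (hFc : Continuous F) (T : Set (EuclideanSpace ℂ (Fin n))) (hT : IsClosed T)
    {ε₀ a b : ℝ}
    (hZ : T ∩ F ⁻¹' {0} ∩ closedBall 0 ε₀ ⊆ {0}) (ha : 0 < a) (hb : b ≤ ε₀) :
    ∃ δ > (0:ℝ), F '' (T ∩ ball 0 b) ∩ ball 0 δ ⊆ F '' (T ∩ ball 0 a) := by
  by_contra hcon
  push_neg at hcon
  have hseq : ∀ k : ℕ, ∃ x, x ∈ T ∧ ‖x‖ < b ∧ ‖F x‖ < 1/(k+1) ∧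
      F x ∉ F '' (T ∩ ball 0 a) := by
    intro k
    obtain ⟨y, hy, hy2⟩ := Set.not_subset.1 (hcon (1/(k+1)) (by positivity))
    obtain ⟨⟨x, ⟨hxT, hxb⟩, rfl⟩, hyb⟩ := hy
    rw [mem_ball_zero_iff] at hxb hyb
    exact ⟨x, hxT, hxb, hyb, hy2⟩
  choose x hxT hxb hxF hxim using hseq
  have hxcb : ∀ k, x k ∈ closedBall (0 : EuclideanSpace ℂ (Fin n)) ε₀ := fun k =>
    mem_closedBall_zero_iff.2 ((hxb k).le.trans hb)
  obtain ⟨x₀, hx₀, φ, hφ, hlim⟩ :=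
    (isCompact_closedBall (0 : EuclideanSpace ℂ (Fin n)) ε₀).tendsto_subseq hxcb
  have hFx₀ : F x₀ = 0 := by
    have h1 : Tendsto (fun k => F (x (φ k))) atTop (𝓝 (F x₀)) :=
      (hFc.tendsto x₀).comp hlim
    have h2 : Tendsto (fun k => F (x (φ k))) atTop (𝓝 0) := by
      rw [tendsto_zero_iff_norm_tendsto_zero]
      refine squeeze_zero (fun k => norm_nonneg _) (fun k => ?_)
        tendsto_one_div_add_atTop_nhds_zero_nat
      have h3 : (1 : ℝ)/(φ k + 1) ≤ 1/(k + 1) := by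
        apply one_div_le_one_div_of_le (by positivity)
        have h4 : (k : ℝ) ≤ φ k := by exact_mod_cast hφ.le_apply
        linarith
      exact (hxF (φ k)).le.trans h3
    exact tendsto_nhds_unique h1 h2
  have hx₀T : x₀ ∈ T := hT.mem_of_tendsto hlim (Eventually.of_forall fun k => hxT (φ k))
  have hx00 : x₀ = 0 := hZ ⟨⟨hx₀T, by simp [hFx₀]⟩, hx₀⟩
  rw [hx00] at hlim
  have hev : ∀ᶠ k in atTop, x (φ k) ∈ ball (0 : EuclideanSpace ℂ (Fin n)) a :=
    hlim (ball_mem_nhds 0 ha)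
  obtain ⟨k, hk⟩ := hev.exists
  exact hxim (φ k) ⟨x (φ k), ⟨hxT _, hk⟩, rfl⟩

lemma stmt14_germEq {n p : ℕ} (F : EuclideanSpace ℂ (Fin n) → EuclideanSpace ℂ (Fin p))
    (hFc : Continuous F) (T : Set (EuclideanSpace ℂ (Fin n))) (hT : IsClosed T)
    {ε₀ a b : ℝ}
    (hZ : T ∩ F ⁻¹' {0} ∩ closedBall 0 ε₀ ⊆ {0})
    (ha : 0 < a) (ha' : a ≤ ε₀) (hb : 0 < b) (hb' : b ≤ ε₀) :
    ∃ δ > (0:ℝ), F '' (T ∩ ball 0 a) ∩ ball 0 δ = F '' (T ∩ ball 0 b) ∩ ball 0 δ := by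
  obtain ⟨δ₁, hδ₁, h1⟩ := stmt14_incl F hFc T hT hZ ha hb'
  obtain ⟨δ₂, hδ₂, h2⟩ := stmt14_incl F hFc T hT hZ hb ha'
  refine ⟨min δ₁ δ₂, lt_min hδ₁ hδ₂, ?_⟩
  apply Set.Subset.antisymm
  · rintro y ⟨hy1, hy2⟩
    exact ⟨h2 ⟨hy1, ball_subset_ball (min_le_right _ _) hy2⟩, hy2⟩
  · rintro y ⟨hy1, hy2⟩
    exact ⟨h1 ⟨hy1, ball_subset_ball (min_le_left _ _) hy2⟩, hy2⟩

open Filter Topology in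
theorem stmt14 {n p : ℕ} (hp : 0 < p) (hpn : p ≤ n)
    (F : EuclideanSpace ℂ (Fin n) → EuclideanSpace ℂ (Fin p))
    (hFan : ∀ x, AnalyticAt ℂ F x) (hF0 : F 0 = 0)
    (hdim : ∃ ε₀ > (0 : ℝ), ∀ ε, 0 < ε → ε ≤ ε₀ →
      dimH (F ⁻¹' {0} ∩ ball (0 : EuclideanSpace ℂ (Fin n)) ε) = (2 * (n - p) : ℕ))
    (hiso : ∃ ε > (0 : ℝ), csingSet F ∩ F ⁻¹' {0} ∩ ball 0 ε = {0}) :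
    ∃ ε₀ > (0 : ℝ), ∀ ε₁ ε₂, 0 < ε₁ → ε₁ ≤ ε₀ → 0 < ε₂ → ε₂ ≤ ε₀ →
      (∃ δ > (0 : ℝ),
        F '' ball 0 ε₁ ∩ ball 0 δ = F '' ball 0 ε₂ ∩ ball 0 δ) ∧
      (∃ δ > (0 : ℝ),
        F '' (csingSet F ∩ ball 0 ε₁) ∩ ball 0 δ =
          F '' (csingSet F ∩ ball 0 ε₂) ∩ ball 0 δ) := by
  obtain ⟨ε', hε', hS⟩ := hiso
  have hFc : Continuous F := continuous_iff_continuousAt.2 fun x => (hFan x).continuousAt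
  have hSc : IsClosed (csingSet F) := stmt14_csing_closed F hFan
  have hcb : ∀ {e : ℝ}, e ≤ ε'/2 →
      csingSet F ∩ F ⁻¹' {0} ∩ closedBall (0 : EuclideanSpace ℂ (Fin n)) e ⊆ {0} := by
    intro e he
    rintro z ⟨hz1, hz2⟩
    have hz3 : z ∈ csingSet F ∩ F ⁻¹' {0} ∩ ball (0 : EuclideanSpace ℂ (Fin n)) ε' :=
      ⟨hz1, mem_ball.2 (lt_of_le_of_lt (mem_closedBall.1 hz2) (by linarith))⟩
    rw [hS] at hz3
    exact hz3
  by_cases hA : ∀ r > (0:ℝ), ∃ x, F x = 0 ∧ x ∉ csingSet F ∧ ‖x‖ < r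
  · refine ⟨ε'/2, by linarith, ?_⟩
    intro ε₁ ε₂ h1 h1' h2 h2'
    constructor
    · -- image part via open mapping at a regular point of the fibre
      obtain ⟨x, hxZ, hxS, hxr⟩ := hA (min ε₁ ε₂) (lt_min h1 h2)
      have hsurj : LinearMap.range (fderiv ℂ F x).toLinearMap = ⊤ := by
        rw [LinearMap.range_eq_top]
        by_contra hns
        exact hxS ((stmt14_mem_csingSet_iff F x).2 hns)
      have hmap : Filter.map F (𝓝 x) = 𝓝 (0 : EuclideanSpace ℂ (Fin p)) := by
        have := ((hFan x).hasStrictFDerivAt).map_nhds_eq_of_surj hsurj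
        rwa [hxZ] at this
      have hρpos : (0:ℝ) < min ε₁ ε₂ - ‖x‖ := sub_pos.2 hxr
      have himg : F '' ball x (min ε₁ ε₂ - ‖x‖) ∈ 𝓝 (0 : EuclideanSpace ℂ (Fin p)) := by
        rw [← hmap]
        exact image_mem_map (ball_mem_nhds x hρpos)
      obtain ⟨δ, hδ, hδsub⟩ := Metric.mem_nhds_iff.1 himg
      have hballs : ball x (min ε₁ ε₂ - ‖x‖) ⊆
          ball (0 : EuclideanSpace ℂ (Fin n)) (min ε₁ ε₂) := by
        intro y hy
        rw [mem_ball] at hy ⊢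
        calc dist y 0 ≤ dist y x + dist x 0 := dist_triangle _ _ _
        _ < (min ε₁ ε₂ - ‖x‖) + ‖x‖ := by
            have : dist x 0 = ‖x‖ := by simp [dist_eq_norm]
            rw [this]; linarith
        _ = min ε₁ ε₂ := by ring
      have key : ∀ {e : ℝ}, min ε₁ ε₂ ≤ e →
          F '' ball (0 : EuclideanSpace ℂ (Fin n)) e ∩ ball 0 δ = ball 0 δ := by
        intro e he
        apply Set.inter_eq_self_of_subset_right
        exact hδsub.trans (Set.image_mono (hballs.trans (ball_subset_ball he)))
      exact ⟨δ, hδ, by rw [key (min_le_left _ _), key (min_le_right _ _)]⟩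
    · exact stmt14_germEq F hFc (csingSet F) hSc (hcb le_rfl) h1 h1' h2 h2'
  · push_neg at hA
    obtain ⟨r, hr, hB⟩ := hA
    have hε₀ : (0:ℝ) < min (ε'/2) (r/2) := lt_min (by linarith) (by linarith)
    have hZ0 : univ ∩ F ⁻¹' {0} ∩
        closedBall (0 : EuclideanSpace ℂ (Fin n)) (min (ε'/2) (r/2)) ⊆ {0} := by
      rintro z ⟨⟨-, hz2⟩, hz3⟩
      have hzr : ‖z‖ < r := by
        have := mem_closedBall_zero_iff.1 hz3
        have h5 : min (ε'/2) (r/2) ≤ r/2 := min_le_right _ _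
        linarith
      have hzS : z ∈ csingSet F := by
        by_contra h
        exact absurd hzr (not_lt.2 (hB z hz2 h))
      exact hcb (min_le_left _ _) ⟨⟨hzS, hz2⟩, hz3⟩
    refine ⟨min (ε'/2) (r/2), hε₀, fun ε₁ ε₂ h1 h1' h2 h2' => ⟨?_, ?_⟩⟩
    · obtain ⟨δ, hδ, heq⟩ := stmt14_germEq F hFc univ isClosed_univ hZ0 h1 h1' h2 h2'
      exact ⟨δ, hδ, by simpa [Set.univ_inter] using heq⟩
    · exact stmt14_germEq F hFc (csingSet F) hSc
        (hcb (le_trans (min_le_left _ _) le_rfl)) h1 h1' h2 h2'
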